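/- arXiv:0805.2016 — 5 statements merged into one kernel-verified Lean document; each statement's English description precedes it below -/
import Mathlib

section
/- Let z₁,…,zₙ be complex numbers on the unit circle and P(z) = ∏ᵢ (z − zᵢ). If z lies on the unit circle, z ≠ zᵢ for all i, and Im(e^{−iθ}·P(z)) = 0 for a real number θ, then z^n = e^{i(2θ − Σᵢ arg(zᵢ))}·(−1)^n, i.e., writing z = e^{iφ}, one has n·φ ≡ 2θ − Σᵢ arg(zᵢ) + nπ (mod 2π). -/
open Complex Finset

theorem pow_eq_of_im_eq_zero (n : ℕ) (z : Fin n → ℂ) (hz : ∀ i, ‖z i‖ = 1)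
    (θ : ℝ) (w : ℂ) (hw : ‖w‖ = 1) (hne : ∀ i, w ≠ z i)
    (him : (Complex.exp (-θ * Complex.I) * ∏ i, (w - z i)).im = 0) :
    w ^ n = Complex.exp (((2 * θ - ∑ i, Complex.arg (z i)) : ℝ) * Complex.I) * (-1) ^ n := by
  have hw0 : w ≠ 0 := fun h => by simp [h] at hw
  have hz0 : ∀ i, z i ≠ 0 := fun i h => by simpa [h] using hz i
  have hP : (∏ i, (w - z i)) ≠ 0 :=
    Finset.prod_ne_zero_iff.2 fun i _ => sub_ne_zero.2 (hne i)
  have hcw : (starRingEnd ℂ) w = w⁻¹ := (Complex.inv_eq_conj hw).symm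
  have hcz : ∀ i, (starRingEnd ℂ) (z i) = (z i)⁻¹ := fun i =>
    (Complex.inv_eq_conj (hz i)).symm
  -- conjugate of each factor
  have hfac : ∀ i, (starRingEnd ℂ) (w - z i) = (-1) * (w - z i) * w⁻¹ * (z i)⁻¹ := by
    intro i
    rw [map_sub, hcw, hcz]
    field_simp [hw0, hz0 i]
    ring
  have hconjP : (starRingEnd ℂ) (∏ i, (w - z i)) =
      (-1) ^ n * (∏ i, (w - z i)) * (w ^ n)⁻¹ * (∏ i, z i)⁻¹ := by
    rw [map_prod]
    simp_rw [hfac]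
    rw [Finset.prod_mul_distrib, Finset.prod_mul_distrib, Finset.prod_mul_distrib,
      Finset.prod_const, Finset.prod_const, Finset.prod_inv_distrib, ← inv_pow]
    simp [mul_comm, mul_assoc, mul_left_comm, inv_pow]
  -- the expression is real, so equals its conjugate
  have hreal : (starRingEnd ℂ) (Complex.exp (-θ * Complex.I) * ∏ i, (w - z i)) =
      Complex.exp (-θ * Complex.I) * ∏ i, (w - z i) :=
    Complex.conj_eq_iff_im.2 him
  have hcexp : (starRingEnd ℂ) (Complex.exp (-θ * Complex.I)) =
      Complex.exp ((θ : ℂ) * Complex.I) := by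
    rw [← Complex.exp_conj]
    congr 1
    simp
  rw [map_mul, hcexp, hconjP] at hreal
  -- z i = exp(arg (z i) * I)
  have hzi : ∀ i, z i = Complex.exp ((Complex.arg (z i) : ℂ) * Complex.I) := by
    intro i
    conv_lhs => rw [← Complex.norm_mul_exp_arg_mul_I (z i)]
    rw [hz i, Complex.ofReal_one, one_mul]
  have hprodz : (∏ i, z i) = Complex.exp ((∑ i, (Complex.arg (z i) : ℂ)) * Complex.I) := by
    rw [Finset.sum_mul, Complex.exp_sum]
    exact Finset.prod_congr rfl fun i _ => hzi i
  -- derive the equation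
  have hwn : w ^ n ≠ 0 := pow_ne_zero _ hw0
  have hpz : (∏ i, z i) ≠ 0 := Finset.prod_ne_zero_iff.2 fun i _ => hz0 i
  have hkey : Complex.exp ((θ : ℂ) * Complex.I) * (-1) ^ n =
      Complex.exp (-θ * Complex.I) * (w ^ n) * (∏ i, z i) := by
    have := hreal
    field_simp at this
    -- rearrange
    have h2 : Complex.exp ((θ : ℂ) * Complex.I) * ((-1) ^ n * (∏ i, (w - z i))) =
        Complex.exp (-θ * Complex.I) * (∏ i, (w - z i)) * (w ^ n * ∏ i, z i) := by
      field_simp at hreal ⊢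
      linear_combination hreal
    apply mul_right_cancel₀ hP
    linear_combination h2
  -- solve for w ^ n
  have hexp0 : Complex.exp (-θ * Complex.I) ≠ 0 := Complex.exp_ne_zero _
  rw [hprodz] at hkey
  simp only [neg_mul] at hkey
  have : w ^ n = Complex.exp ((θ : ℂ) * Complex.I) * (-1) ^ n *
      (Complex.exp (-((θ:ℂ) * Complex.I)))⁻¹ * (Complex.exp ((∑ i, (Complex.arg (z i) : ℂ)) * Complex.I))⁻¹ := by
    field_simp
    rw [mul_comm (∑ i, (Complex.arg (z i) : ℂ)) Complex.I] at hkey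
    linear_combination -hkey
  rw [this, ← Complex.exp_neg, ← Complex.exp_neg, neg_neg]
  rw [show Complex.exp ((θ:ℂ) * Complex.I) * (-1)^n * Complex.exp ((θ:ℂ) * Complex.I) *
      Complex.exp (-((∑ i, (Complex.arg (z i) : ℂ)) * Complex.I)) =
      Complex.exp ((θ:ℂ) * Complex.I) * Complex.exp ((θ:ℂ) * Complex.I) *
      Complex.exp (-((∑ i, (Complex.arg (z i) : ℂ)) * Complex.I)) * (-1)^n from by ring]
  rw [← Complex.exp_add, ← Complex.exp_add]
  congr 2
  push_cast
  ring
end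

section
/- Let z₁,…,zₙ lie on the unit circle, P(z) = ∏ᵢ (z − zᵢ), θ ∈ ℝ, and set Ω = (2θ − Σᵢ arg(zᵢ))/n − π. If z = e^{i(Ω + 2kπ/n)} for some integer k and z ≠ zᵢ for all i, then Im(e^{−iθ}·P(z)) = 0. -/
theorem im_eq_zero_of_ngon (n : ℕ) (hn : 1 ≤ n) (z : Fin n → ℂ)
    (hz : ∀ i, ‖z i‖ = 1) (θ : ℝ)
    (Ω : ℝ) (hΩ : Ω = (2 * θ - ∑ i, Complex.arg (z i)) / n - Real.pi)
    (k : ℤ) (w : ℂ) (hw : w = Complex.exp (((Ω + 2 * k * Real.pi / n) : ℝ) * Complex.I))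
    (hne : ∀ i, w ≠ z i) :
    (Complex.exp (-θ * Complex.I) * ∏ i, (w - z i)).im = 0 := by
  have hn0 : (n : ℝ) ≠ 0 := by positivity
  set α : Fin n → ℝ := fun i => (z i).arg with hα
  have hzi : ∀ i, z i = Complex.exp ((α i : ℂ) * Complex.I) := by
    intro i
    have h := Complex.norm_mul_exp_arg_mul_I (z i)
    rw [hz i] at h
    simpa using h.symm
  set φ : ℝ := Ω + 2 * k * Real.pi / n with hφ
  have key : ∀ i, w - z i = Complex.exp ((((φ + α i)/2 : ℝ) : ℂ) * Complex.I) *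
      (2 * Complex.I * ((Real.sin ((φ - α i)/2) : ℝ) : ℂ)) := by
    intro i
    rw [hw, hzi i, Complex.ofReal_sin, Complex.sin]
    have e1 : Complex.exp ((φ : ℂ) * Complex.I)
        = Complex.exp ((((φ + α i)/2 : ℝ) : ℂ) * Complex.I)
          * Complex.exp ((((φ - α i)/2 : ℝ) : ℂ) * Complex.I) := by
      rw [← Complex.exp_add]; congr 1; push_cast; ring
    have e2 : Complex.exp ((α i : ℂ) * Complex.I)
        = Complex.exp ((((φ + α i)/2 : ℝ) : ℂ) * Complex.I)
          * Complex.exp (-((((φ - α i)/2 : ℝ) : ℂ) * Complex.I)) := by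
      rw [← Complex.exp_add]; congr 1; push_cast; ring
    rw [e1, e2]
    have hI : Complex.I * Complex.I = -1 := Complex.I_mul_I
    have hneg : Complex.exp (-(((φ - α i)/2 : ℝ) : ℂ) * Complex.I)
        = Complex.exp (-((((φ - α i)/2 : ℝ) : ℂ) * Complex.I)) := by rw [neg_mul]
    rw [← hneg]
    linear_combination (Complex.exp ((((φ + α i)/2 : ℝ) : ℂ) * Complex.I) *
      (Complex.exp ((((φ - α i)/2 : ℝ) : ℂ) * Complex.I)
        - Complex.exp (-(((φ - α i)/2 : ℝ) : ℂ) * Complex.I))) * hI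
  set R : ℝ := ∏ i, Real.sin ((φ - α i)/2) with hR
  set S : ℝ := ∑ i, (φ + α i)/2 with hS
  have hprod : ∏ i, (w - z i)
      = Complex.exp ((S : ℂ) * Complex.I) * ((2 * Complex.I)^n * (R : ℂ)) := by
    rw [Finset.prod_congr rfl fun i _ => key i, Finset.prod_mul_distrib]
    congr 1
    · have hsum : ((S : ℂ)) * Complex.I = ∑ i, ((((φ + α i)/2 : ℝ) : ℂ) * Complex.I) := by
        rw [hS]; push_cast; rw [Finset.sum_mul]
      rw [hsum, Complex.exp_sum]
    · rw [Finset.prod_mul_distrib, Finset.prod_const, Finset.card_univ, Fintype.card_fin]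
      congr 1
      rw [hR]; push_cast; rfl
  have hT : -θ + S + n * (Real.pi/2) = k * Real.pi := by
    have hSum : S = (n * φ + ∑ i, α i) / 2 := by
      have hs2 : ∑ i : Fin n, (φ + α i) = n * φ + ∑ i, α i := by
        simp [Finset.sum_add_distrib, Finset.card_univ, mul_comm]
      rw [hS, ← Finset.sum_div, hs2]
    have hΩn : (n : ℝ) * Ω = 2 * θ - (∑ i, α i) - n * Real.pi := by
      rw [hΩ]; field_simp
    have hφn : (n : ℝ) * φ = n * Ω + 2 * k * Real.pi := by
      rw [hφ]; field_simp
    rw [hSum, hφn, hΩn]; ring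
  have hIpow : Complex.I ^ n = Complex.exp ((((n : ℝ) * (Real.pi/2) : ℝ) : ℂ) * Complex.I) := by
    have h2 : Complex.exp (((Real.pi/2 : ℝ) : ℂ) * Complex.I) = Complex.I := by
      rw [Complex.exp_mul_I]; push_cast; simp
    rw [show ((((n : ℝ) * (Real.pi/2) : ℝ)) : ℂ) * Complex.I
        = n * (((Real.pi/2 : ℝ) : ℂ) * Complex.I) by push_cast; ring,
      Complex.exp_nat_mul, h2]
  set T : ℝ := (k : ℝ) * Real.pi with hTdef
  set C : ℝ := 2^n * R with hC
  have hexp : Complex.exp (-(θ:ℂ) * Complex.I) * Complex.exp ((S : ℂ) * Complex.I) *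
      Complex.exp ((((n : ℝ) * (Real.pi/2) : ℝ) : ℂ) * Complex.I)
      = Complex.exp ((T : ℂ) * Complex.I) := by
    rw [← Complex.exp_add, ← Complex.exp_add]
    congr 1
    have hTc : ((T : ℝ) : ℂ) = ((-θ + S + n * (Real.pi/2) : ℝ) : ℂ) :=
      congrArg (fun x : ℝ => (x : ℂ)) hT.symm
    push_cast at hTc
    push_cast
    linear_combination (-Complex.I) * hTc
  have hfinal : Complex.exp (-θ * Complex.I) * ∏ i, (w - z i)
      = Complex.exp ((T : ℂ) * Complex.I) * ((C : ℝ) : ℂ) := by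
    rw [hprod, mul_pow, hIpow, ← hexp, hC]
    push_cast
    ring
  rw [hfinal, Complex.mul_im, Complex.exp_ofReal_mul_I_im]
  simp [hTdef, Real.sin_int_mul_pi]
end

section
/- Let z₁,…,zₙ (n ≥ 1) be points on the unit circle, P(z) = ∏ᵢ (z − zᵢ), θ ∈ ℝ, and Ω = (2θ − Σᵢ arg(zᵢ))/n − π. Then {z : |z| = 1 ∧ Im(e^{−iθ}P(z)) = 0} = {z₁,…,zₙ} ∪ {e^{i(Ω + 2kπ/n)} : k = 1,…,n}. -/
open Complex

private lemma conj_eq_inv_of_abs_one {u : ℂ} (hu : ‖u‖ = 1) :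
    (starRingEnd ℂ) u = u⁻¹ := by
  have h : (starRingEnd ℂ) u * u = 1 := by
    rw [mul_comm, Complex.mul_conj, Complex.normSq_eq_norm_sq, hu]; norm_num
  exact eq_inv_of_mul_eq_one_left h

theorem curve_inter_circle (n : ℕ) (hn : 1 ≤ n) (z : Fin n → ℂ)
    (hz : ∀ i, ‖z i‖ = 1) (θ : ℝ)
    (Ω : ℝ) (hΩ : Ω = (2 * θ - ∑ i, Complex.arg (z i)) / n - Real.pi) :
    {w : ℂ | ‖w‖ = 1 ∧ (Complex.exp (-θ * Complex.I) * ∏ i, (w - z i)).im = 0} =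
      Set.range z ∪
        {w : ℂ | ∃ k : ℕ, 1 ≤ k ∧ k ≤ n ∧
          w = Complex.exp (((Ω + 2 * k * Real.pi / n) : ℝ) * Complex.I)} := by
  have hnne : n ≠ 0 := Nat.one_le_iff_ne_zero.mp hn
  have hn0 : (n : ℝ) ≠ 0 := Nat.cast_ne_zero.mpr hnne
  have hn0c : (n : ℂ) ≠ 0 := Nat.cast_ne_zero.mpr hnne
  have hz0 : ∀ i, z i ≠ 0 := fun i h => by
    have := hz i; rw [h] at this; simp at this
  set S : ℝ := ∑ i, Complex.arg (z i) with hS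
  have hzi : ∀ i, z i = Complex.exp ((Complex.arg (z i) : ℂ) * Complex.I) := fun i => by
    conv_lhs => rw [← Complex.norm_mul_exp_arg_mul_I (z i)]
    rw [hz i]; norm_num
  have hprod : ∏ i, z i = Complex.exp ((S : ℂ) * Complex.I) := by
    rw [hS]; push_cast
    rw [Finset.sum_mul, Complex.exp_sum]
    exact Finset.prod_congr rfl fun i _ => hzi i
  have hneg1 : Complex.exp ((n : ℂ) * Real.pi * Complex.I) = (-1 : ℂ) ^ n := by
    rw [mul_assoc, Complex.exp_nat_mul, Complex.exp_pi_mul_I]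
  have hneg1' : Complex.exp (-((n : ℂ) * Real.pi) * Complex.I) = (-1 : ℂ) ^ n := by
    rw [neg_mul, Complex.exp_neg, hneg1, ← inv_pow, inv_neg, inv_one]
  have hnΩ : ((n : ℝ) * Ω : ℝ) = 2 * θ - S - n * Real.pi := by
    rw [hΩ]; field_simp
  have hpz : (∏ i, z i) ≠ 0 := Finset.prod_ne_zero_iff.mpr fun i _ => hz0 i
  set E : ℂ := Complex.exp ((θ : ℂ) * Complex.I) with hE
  set E' : ℂ := Complex.exp (-(θ : ℂ) * Complex.I) with hE'
  have hEE' : E * E' = 1 := by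
    rw [hE, hE', ← Complex.exp_add,
      show (θ : ℂ) * Complex.I + -(θ : ℂ) * Complex.I = 0 by ring, Complex.exp_zero]
  have hsq : (-1 : ℂ) ^ n * (-1 : ℂ) ^ n = 1 := by
    rw [← pow_add, ← two_mul, pow_mul]; norm_num
  have hEinv : E⁻¹ = E' := (eq_inv_of_mul_eq_one_left (by rw [mul_comm] at hEE'; exact hEE')).symm
  have hninv : ((-1 : ℂ) ^ n)⁻¹ = (-1 : ℂ) ^ n := (eq_inv_of_mul_eq_one_left hsq).symm
  have hEq : Complex.exp (((n : ℝ) * Ω : ℝ) * Complex.I)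
      = E * E * ((-1 : ℂ) ^ n) * (∏ i, z i)⁻¹ := by
    have h1 : (((n : ℝ) * Ω : ℝ) : ℂ) * Complex.I
        = (θ : ℂ) * Complex.I + (θ : ℂ) * Complex.I + (-(S : ℂ)) * Complex.I
          + (-((n : ℂ) * Real.pi)) * Complex.I := by
      rw [hnΩ]; push_cast; ring
    rw [h1, Complex.exp_add, Complex.exp_add, Complex.exp_add, hneg1', hprod,
      neg_mul, Complex.exp_neg, hE]
    ring
  have hexpconj : (starRingEnd ℂ) E' = E := by
    rw [hE', hE, ← Complex.exp_conj]
    congr 1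
    simp [Complex.conj_ofReal]
  -- key equivalence
  have key : ∀ w : ℂ, ‖w‖ = 1 →
      ((E' * ∏ i, (w - z i)).im = 0 ↔
        (∏ i, (w - z i)) = 0 ∨ w ^ n = Complex.exp (((n : ℝ) * Ω : ℝ) * Complex.I)) := by
    intro w hw1
    have hw0 : w ≠ 0 := fun h => by rw [h] at hw1; simp at hw1
    have hwn0 : w ^ n ≠ 0 := pow_ne_zero _ hw0
    have hwconj : (starRingEnd ℂ) w = w⁻¹ := conj_eq_inv_of_abs_one hw1
    have hconjP : (starRingEnd ℂ) (∏ i, (w - z i))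
        = (-1 : ℂ) ^ n * (∏ i, (w - z i)) * (w ^ n * ∏ i, z i)⁻¹ := by
      rw [map_prod]
      have h2 : ∀ i ∈ Finset.univ, (starRingEnd ℂ) (w - z i)
          = (-1 : ℂ) * (w - z i) * (w * z i)⁻¹ := by
        intro i _
        rw [map_sub, hwconj, conj_eq_inv_of_abs_one (hz i)]
        field_simp [hw0, hz0 i]; ring
      have h2' : (∏ x : Fin n, (w * z x)⁻¹) = (w ^ n * ∏ i, z i)⁻¹ := by
        rw [Finset.prod_inv_distrib, Finset.prod_mul_distrib, Finset.prod_const]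
        simp [Finset.card_univ]
      calc (∏ i, (starRingEnd ℂ) (w - z i))
          = ∏ i, ((-1 : ℂ) * (w - z i) * (w * z i)⁻¹) := Finset.prod_congr rfl h2
        _ = ((∏ _i : Fin n, (-1 : ℂ)) * ∏ i, (w - z i)) * ∏ i, (w * z i)⁻¹ := by
            rw [Finset.prod_mul_distrib, Finset.prod_mul_distrib]
        _ = (-1 : ℂ) ^ n * (∏ i, (w - z i)) * (w ^ n * ∏ i, z i)⁻¹ := by
            rw [h2', Finset.prod_const]
            simp [Finset.card_univ]
    rw [← Complex.conj_eq_iff_im, map_mul, hexpconj, hconjP, hEq]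
    set P : ℂ := ∏ i, (w - z i) with hP
    set Q : ℂ := ∏ i, z i with hQ
    have hWQ : (w ^ n * Q) ≠ 0 := mul_ne_zero hwn0 hpz
    constructor
    · intro h
      by_cases hP0 : P = 0
      · exact Or.inl hP0
      right
      have h3 : E * ((-1 : ℂ) ^ n * P) = E' * P * (w ^ n * Q) := by
        calc E * ((-1 : ℂ) ^ n * P)
            = E * ((-1 : ℂ) ^ n * P * ((w ^ n * Q)⁻¹ * (w ^ n * Q))) := by
              rw [inv_mul_cancel₀ hWQ, mul_one]
          _ = E * ((-1 : ℂ) ^ n * P * (w ^ n * Q)⁻¹) * (w ^ n * Q) := by ring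
          _ = E' * P * (w ^ n * Q) := by rw [h]
      have h4 : P * (w ^ n * Q) = P * (E * E * (-1 : ℂ) ^ n) := by
        linear_combination (-E) * h3 - P * (w ^ n * Q) * hEE'
      have h5 := mul_left_cancel₀ hP0 h4
      rw [← h5, mul_assoc, mul_inv_cancel₀ hpz, mul_one]
    · rintro (hP0 | hwn)
      · rw [hP0]; ring
      rw [hwn]
      have hc : E * E * (-1 : ℂ) ^ n * Q⁻¹ * Q = E * E * (-1 : ℂ) ^ n := by
        rw [mul_assoc, inv_mul_cancel₀ hpz, mul_one]
      rw [hc, mul_inv, mul_inv, hEinv, hninv]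
      linear_combination ((-1 : ℂ) ^ n * (-1 : ℂ) ^ n * P * E') * hEE' + (P * E') * hsq
  ext w
  simp only [Set.mem_setOf_eq, Set.mem_union, Set.mem_range]
  constructor
  · rintro ⟨hw1, him⟩
    rcases (key w hw1).mp him with hP0 | hwn
    · left
      obtain ⟨i, _, hi⟩ := Finset.prod_eq_zero_iff.mp hP0
      exact ⟨i, (sub_eq_zero.mp hi).symm⟩
    · right
      have : NeZero n := ⟨hnne⟩
      have hroot : (w * Complex.exp (-(Ω : ℂ) * Complex.I)) ^ n = 1 := by
        rw [mul_pow, ← Complex.exp_nat_mul, hwn, ← Complex.exp_add,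
          show (((n : ℝ) * Ω : ℝ) : ℂ) * Complex.I + (n : ℂ) * (-(Ω : ℂ) * Complex.I) = 0
            by push_cast; ring, Complex.exp_zero]
      obtain ⟨m, hm, hmeq⟩ :=
        (Complex.isPrimitiveRoot_exp n hnne).eq_pow_of_pow_eq_one hroot
      rw [← Complex.exp_nat_mul] at hmeq
      have hwm : w = Complex.exp ((m : ℂ) * (2 * (Real.pi : ℂ) * Complex.I / n)
          + (Ω : ℂ) * Complex.I) := by
        have hx : w * Complex.exp (-(Ω : ℂ) * Complex.I) * Complex.exp ((Ω : ℂ) * Complex.I)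
            = Complex.exp ((m : ℂ) * (2 * (Real.pi : ℂ) * Complex.I / n))
              * Complex.exp ((Ω : ℂ) * Complex.I) := by rw [hmeq]
        rw [mul_assoc, ← Complex.exp_add,
          show -(Ω : ℂ) * Complex.I + (Ω : ℂ) * Complex.I = 0 by ring,
          Complex.exp_zero, mul_one] at hx
        rw [hx, ← Complex.exp_add]
      by_cases hm0 : m = 0
      · refine ⟨n, hn, le_refl n, ?_⟩
        rw [hwm, hm0,
          show ((0 : ℕ) : ℂ) * (2 * (Real.pi : ℂ) * Complex.I / n) + (Ω : ℂ) * Complex.I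
            = (Ω : ℂ) * Complex.I by push_cast; ring,
          show (((Ω + 2 * (n : ℝ) * Real.pi / n : ℝ)) : ℂ) * Complex.I
            = (Ω : ℂ) * Complex.I + 2 * (Real.pi : ℂ) * Complex.I by
            push_cast; field_simp,
          Complex.exp_add, Complex.exp_two_pi_mul_I, mul_one]
      · refine ⟨m, Nat.one_le_iff_ne_zero.mpr hm0, le_of_lt hm, ?_⟩
        rw [hwm]
        congr 1
        push_cast
        field_simp
        ring
  · rintro (⟨i, hi⟩ | ⟨k, hk1, hkn, hk⟩)
    · subst hi
      refine ⟨hz i, ?_⟩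
      refine (key (z i) (hz i)).mpr (Or.inl ?_)
      exact Finset.prod_eq_zero (Finset.mem_univ i) (by ring)
    · subst hk
      refine ⟨Complex.norm_exp_ofReal_mul_I _, ?_⟩
      refine (key _ (Complex.norm_exp_ofReal_mul_I _)).mpr (Or.inr ?_)
      rw [← Complex.exp_nat_mul,
        show (n : ℂ) * ((((Ω + 2 * k * Real.pi / n : ℝ)) : ℂ) * Complex.I)
          = (((n : ℝ) * Ω : ℝ) : ℂ) * Complex.I + (k : ℂ) * (2 * (Real.pi : ℂ) * Complex.I) by
          push_cast; field_simp,
        Complex.exp_add, Complex.exp_nat_mul, Complex.exp_two_pi_mul_I, one_pow, mul_one]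
end

section
/- Let z₁,…,zₙ (n ≥ 1) be points on the unit circle and P(z) = ∏ᵢ (z − zᵢ). For any real θ, the set {z : |z| = 1, z ∉ {z₁,…,zₙ}, Im(e^{−iθ}P(z)) = 0} has at most n elements. -/
theorem curve_inter_circle_card (n : ℕ) (hn : 1 ≤ n) (z : Fin n → ℂ)
    (hz : ∀ i, ‖z i‖ = 1) (θ : ℝ) :
    {w : ℂ | ‖w‖ = 1 ∧ w ∉ Set.range z ∧
        (Complex.exp (-θ * Complex.I) * ∏ i, (w - z i)).im = 0}.Finite ∧
    {w : ℂ | ‖w‖ = 1 ∧ w ∉ Set.range z ∧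
        (Complex.exp (-θ * Complex.I) * ∏ i, (w - z i)).im = 0}.ncard ≤ n := by
  set c : ℂ := Complex.exp (-θ * Complex.I) with hc
  have hcne : c ≠ 0 := Complex.exp_ne_zero _
  have hzne : ∀ i, z i ≠ 0 := by
    intro i h
    have := hz i
    rw [h] at this
    simp at this
  have hQne : (∏ i, z i) ≠ 0 := Finset.prod_ne_zero_iff.mpr fun i _ => hzne i
  set a : ℂ := (-1 : ℂ)^n * (starRingEnd ℂ) c / (c * ∏ i, z i) with ha
  have hsub : {w : ℂ | ‖w‖ = 1 ∧ w ∉ Set.range z ∧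
      (c * ∏ i, (w - z i)).im = 0} ⊆ ((Polynomial.nthRoots n a).toFinset : Set ℂ) := by
    intro w hw
    obtain ⟨hw1, hw2, hw3⟩ := hw
    have hwne : w ≠ 0 := by
      intro h; rw [h] at hw1; simp at hw1
    have hPne : (∏ i, (w - z i)) ≠ 0 := Finset.prod_ne_zero_iff.mpr fun i _ =>
      sub_ne_zero.mpr (fun h => hw2 ⟨i, h.symm⟩)
    have hwconj : (starRingEnd ℂ) w = w⁻¹ := by
      have h1 : w * (starRingEnd ℂ) w = 1 := by
        rw [Complex.mul_conj]
        norm_cast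
        rw [Complex.normSq_eq_norm_sq, hw1]; norm_num
      exact eq_inv_of_mul_eq_one_right h1
    have hzconj : ∀ i, (starRingEnd ℂ) (z i) = (z i)⁻¹ := by
      intro i
      have h1 : z i * (starRingEnd ℂ) (z i) = 1 := by
        rw [Complex.mul_conj]
        norm_cast
        rw [Complex.normSq_eq_norm_sq, hz i]; norm_num
      exact eq_inv_of_mul_eq_one_right h1
    have hconj : (starRingEnd ℂ) (c * ∏ i, (w - z i)) = c * ∏ i, (w - z i) :=
      Complex.conj_eq_iff_im.mpr hw3
    have hfac : ∀ i : Fin n, (starRingEnd ℂ) (w - z i) = -(w - z i) * (w * z i)⁻¹ := by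
      intro i
      rw [map_sub, hwconj, hzconj]
      field_simp [hwne, hzne i]
      ring
    have hprodconj : (starRingEnd ℂ) (∏ i, (w - z i))
        = (-1 : ℂ)^n * (∏ i, (w - z i)) * (w^n * ∏ i, z i)⁻¹ := by
      rw [map_prod]
      simp only [hfac]
      rw [Finset.prod_mul_distrib]
      congr 1
      · have hneg : ∀ x : Fin n, -(w - z x) = (-1 : ℂ) * (w - z x) := fun x => by ring
        simp only [hneg, Finset.prod_mul_distrib, Finset.prod_const, Finset.card_univ,
          Fintype.card_fin]
      · rw [Finset.prod_inv_distrib]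
        congr 1
        rw [Finset.prod_mul_distrib, Finset.prod_const, Finset.card_univ, Fintype.card_fin]
    rw [map_mul, hprodconj] at hconj
    have hkey : (starRingEnd ℂ) c * ((-1:ℂ)^n * ∏ i, (w - z i))
        = c * (∏ i, (w - z i)) * (w^n * ∏ i, z i) := by
      have hwQ : (w^n * ∏ i, z i) ≠ 0 := mul_ne_zero (pow_ne_zero _ hwne) hQne
      field_simp at hconj
      linear_combination (∏ i, (w - z i)) * hconj
    have hwn : w ^ n = a := by
      rw [ha]
      rw [eq_div_iff (mul_ne_zero hcne hQne)]
      apply mul_right_cancel₀ hPne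
      linear_combination -hkey
    rw [Finset.mem_coe, Multiset.mem_toFinset, Polynomial.mem_nthRoots (by omega : 0 < n)]
    exact hwn
  constructor
  · exact Set.Finite.subset ((Polynomial.nthRoots n a).toFinset.finite_toSet) hsub
  · calc _ ≤ ((Polynomial.nthRoots n a).toFinset : Set ℂ).ncard :=
        Set.ncard_le_ncard hsub ((Polynomial.nthRoots n a).toFinset.finite_toSet)
      _ = (Polynomial.nthRoots n a).toFinset.card := Set.ncard_coe_finset _
      _ ≤ (Polynomial.nthRoots n a).card := Multiset.toFinset_card_le _
      _ ≤ n := Polynomial.card_nthRoots n a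
end

section
/- Let z₁,…,zₙ (n ≥ 1) be points on the unit circle, P(z) = ∏ᵢ (z − zᵢ), θ ∈ ℝ, and Ω = (2θ − Σᵢ arg(zᵢ))/n − π. If z is on the unit circle, z ∉ {z₁,…,zₙ}, and Im(e^{−iθ}P(z)) = 0, then multiplying z by a primitive n-th root of unity ζ = e^{2πi/n} yields a point ζz that, if it is also not a root of P, again satisfies Im(e^{−iθ}P(ζz)) = 0. -/
theorem rotation_invariance (n : ℕ) (hn : 1 ≤ n) (z : Fin n → ℂ)
    (hz : ∀ i, ‖z i‖ = 1) (θ : ℝ)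
    (w : ℂ) (hw : ‖w‖ = 1) (hne : ∀ i, w ≠ z i)
    (him : (Complex.exp (-θ * Complex.I) * ∏ i, (w - z i)).im = 0)
    (ζ : ℂ) (hζ : ζ = Complex.exp ((2 * Real.pi / n : ℝ) * Complex.I))
    (hne' : ∀ i, ζ * w ≠ z i) :
    (Complex.exp (-θ * Complex.I) * ∏ i, (ζ * w - z i)).im = 0 := by
  have hn0 : (n : ℂ) ≠ 0 := Nat.cast_ne_zero.mpr (by omega)
  have hζn : ζ ^ n = 1 := by
    rw [hζ, ← Complex.exp_nat_mul]
    have h : (n : ℂ) * ((2 * Real.pi / n : ℝ) * Complex.I)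
        = 2 * Real.pi * Complex.I := by
      push_cast
      field_simp
    rw [h, Complex.exp_two_pi_mul_I]
  have hw0 : w ≠ 0 := by
    intro h; rw [h] at hw; simp at hw
  have hz0 : ∀ i, z i ≠ 0 := by
    intro i h; have := hz i; rw [h] at this; simp at this
  set E := Complex.exp (-θ * Complex.I) with hE
  set c := ∏ i, z i with hc
  have hc0 : c ≠ 0 := Finset.prod_ne_zero_iff.mpr fun i _ => hz0 i
  -- key conjugation identity
  have key : ∀ u : ℂ, ‖u‖ = 1 →
      (starRingEnd ℂ) (∏ i, (u - z i)) * (u ^ n * c) = (-1) ^ n * ∏ i, (u - z i) := by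
    intro u hu
    have hu0 : u ≠ 0 := by intro h; rw [h] at hu; simp at hu
    have hcu : (starRingEnd ℂ) u = u⁻¹ := (Complex.inv_eq_conj hu).symm
    have hcz : ∀ i, (starRingEnd ℂ) (z i) = (z i)⁻¹ :=
      fun i => (Complex.inv_eq_conj (hz i)).symm
    have hun : u ^ n = ∏ _i : Fin n, u := by simp
    have hfac : ∀ i : Fin n, (starRingEnd ℂ) (u - z i) * (u * z i) = -(u - z i) := by
      intro i
      rw [map_sub, hcu, hcz i, sub_mul,
        show u⁻¹ * (u * z i) = z i by rw [← mul_assoc, inv_mul_cancel₀ hu0, one_mul],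
        show (z i)⁻¹ * (u * z i) = u by
          rw [mul_comm u, ← mul_assoc, inv_mul_cancel₀ (hz0 i), one_mul]]
      exact (neg_sub u (z i)).symm
    calc (starRingEnd ℂ) (∏ i, (u - z i)) * (u ^ n * c)
        = ∏ i, ((starRingEnd ℂ) (u - z i) * (u * z i)) := by
          rw [map_prod, hun, hc, Finset.prod_mul_distrib, Finset.prod_mul_distrib]
      _ = ∏ i, (-(u - z i)) := Finset.prod_congr rfl fun i _ => hfac i
      _ = (-1) ^ n * ∏ i, (u - z i) := by
          have : ∀ i : Fin n, -(u - z i) = (-1) * (u - z i) := fun i => by ring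
          rw [Finset.prod_congr rfl fun i _ => this i, Finset.prod_mul_distrib]
          simp
  have hPw0 : (∏ i, (w - z i)) ≠ 0 :=
    Finset.prod_ne_zero_iff.mpr fun i _ => sub_ne_zero.mpr (hne i)
  have h1 : (starRingEnd ℂ) E * (starRingEnd ℂ) (∏ i, (w - z i))
      = E * ∏ i, (w - z i) := by
    rw [← map_mul]; exact Complex.conj_eq_iff_im.mpr him
  have hkw := key w hw
  have hrel : (starRingEnd ℂ) E * (-1) ^ n = E * (w ^ n * c) := by
    apply mul_right_cancel₀ hPw0
    linear_combination (w ^ n * c) * h1 - (starRingEnd ℂ) E * hkw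
  have habsζw : ‖ζ * w‖ = 1 := by
    rw [norm_mul, hw, hζ, Complex.norm_exp_ofReal_mul_I, one_mul]
  have hk := key (ζ * w) habsζw
  have hpow : (ζ * w) ^ n = w ^ n := by rw [mul_pow, hζn, one_mul]
  rw [hpow] at hk
  have hwnc0 : w ^ n * c ≠ 0 := mul_ne_zero (pow_ne_zero n hw0) hc0
  rw [← Complex.conj_eq_iff_im, map_mul]
  apply mul_right_cancel₀ hwnc0
  linear_combination (starRingEnd ℂ) E * hk + (∏ i, (ζ * w - z i)) * hrel
end
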